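/- Opposite sectors of an annulus through a boundary point of the inner circle: two opposite (antipodal with respect to P) angular sectors of equal aperture α at a point P on the inner circle cut out regions of the annulus whose total area equals (α/π)·(area of the annulus). Precisely: let D, D̃ be concentric disks centered at O with radii R > r, B = D \ int(D̃), and P with dist(O,P) = r. For any half-line ℓ from P at angle θ and aperture 0 < α ≤ π, let S(θ) be the closed sector {P + t(cos φ, sin φ) : t ≥ 0, θ ≤ φ ≤ θ + α}. Then area(B ∩ S(θ)) + area(B ∩ S(θ + π)) = α(R² − r²). -/

import Mathlib

open Real MeasureTheory

open Set

/-- The closed angular sector at `P` of directions with angles in `[a, b]`. -/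
def angularSector (P : ℂ) (a b : ℝ) : Set ℂ :=
  {z : ℂ | ∃ t : ℝ, 0 ≤ t ∧ ∃ φ : ℝ, a ≤ φ ∧ φ ≤ b ∧
    z = P + (t : ℂ) * Complex.exp ((φ : ℝ) * Complex.I)}

noncomputable def secG (R r u : ℝ) : ℝ :=
  ((u + Real.sqrt (u^2 + (R^2 - r^2)))^2 - (max 0 (2*u))^2)/2

lemma secG_add (R r u : ℝ) (h : 0 ≤ R^2 - r^2) :
    secG R r u + secG R r (-u) = R^2 - r^2 := by
  have h2 : (0:ℝ) ≤ u^2 + (R^2-r^2) := by nlinarith [sq_nonneg u]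
  have hs : (Real.sqrt (u^2+(R^2-r^2)))^2 = u^2 + (R^2-r^2) := Real.sq_sqrt h2
  have hneg : ((-u)^2 + (R^2 - r^2)) = u^2 + (R^2 - r^2) := by ring
  have hmax : (max 0 (2*u))^2 + (max 0 (2*(-u)))^2 = 4*u^2 := by
    rcases le_total 0 u with hu | hu
    · rw [max_eq_right (by linarith), max_eq_left (by linarith)]; ring
    · rw [max_eq_left (by linarith), max_eq_right (by linarith)]; ring
  unfold secG
  rw [hneg]
  nlinarith [hs, hmax]

lemma measurableSet_angularSector (P : ℂ) (a b : ℝ) :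
    MeasurableSet (angularSector P a b) := by
  have : angularSector P a b =
      ⋃ n : ℕ, (fun q : ℝ × ℝ => P + (q.1 : ℂ) * Complex.exp ((q.2 : ℝ) * Complex.I)) ''
        (Icc 0 (n:ℝ) ×ˢ Icc a b) := by
    ext z
    constructor
    · rintro ⟨t, ht, φ, h1, h2, rfl⟩
      obtain ⟨n, hn⟩ := exists_nat_ge t
      exact mem_iUnion.2 ⟨n, ⟨(t, φ), ⟨⟨ht, hn⟩, h1, h2⟩, rfl⟩⟩
    · rintro ⟨_, ⟨n, rfl⟩, ⟨t, φ⟩, ⟨⟨ht, _⟩, h1, h2⟩, rfl⟩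
      exact ⟨t, ht, φ, h1, h2, rfl⟩
  rw [this]
  refine MeasurableSet.iUnion fun n => ?_
  have hc : IsCompact ((fun q : ℝ × ℝ => P + (q.1 : ℂ) * Complex.exp ((q.2 : ℝ) * Complex.I)) ''
      (Icc 0 (n:ℝ) ×ˢ Icc a b)) := by
    refine (isCompact_Icc.prod isCompact_Icc).image ?_
    fun_prop
  exact hc.isClosed.measurableSet

private lemma ekey (x y : ℝ) : Complex.exp ((x:ℝ) * Complex.I) * Complex.exp ((y:ℝ) * Complex.I)
    = Complex.exp (((x + y : ℝ)) * Complex.I) := by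
  rw [← Complex.exp_add]; push_cast; ring_nf

lemma sector_preimage (P : ℂ) (γ a b : ℝ) :
    (fun z : ℂ => Complex.exp ((-γ : ℝ) * Complex.I) * (z - P)) ⁻¹'
      angularSector 0 a b = angularSector P (a + γ) (b + γ) := by
  have k1 : Complex.exp ((γ:ℝ) * Complex.I) * Complex.exp ((-γ:ℝ) * Complex.I) = 1 := by
    rw [ekey]; norm_num
  ext z
  simp only [mem_preimage, angularSector, mem_setOf_eq]
  constructor
  · rintro ⟨t, ht, φ, h1, h2, hz⟩
    refine ⟨t, ht, φ + γ, by linarith, by linarith, ?_⟩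
    have k2 : Complex.exp ((γ:ℝ) * Complex.I) * Complex.exp ((φ:ℝ) * Complex.I)
        = Complex.exp (((φ + γ : ℝ)) * Complex.I) := by
      rw [ekey, show γ + φ = φ + γ by ring]
    linear_combination (Complex.exp ((γ:ℝ) * Complex.I)) * hz - (z - P) * k1
      + (t:ℂ) * k2
  · rintro ⟨t, ht, φ, h1, h2, hz⟩
    refine ⟨t, ht, φ - γ, by linarith, by linarith, ?_⟩
    have k3 : Complex.exp ((-γ:ℝ) * Complex.I) * Complex.exp ((φ:ℝ) * Complex.I)
        = Complex.exp (((φ - γ : ℝ)) * Complex.I) := by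
      rw [ekey, show -γ + φ = φ - γ by ring]
    linear_combination Complex.exp ((-γ:ℝ) * Complex.I) * hz + (t:ℂ) * k3

private lemma ekeypi (x : ℝ) : Complex.exp (((x + π : ℝ)) * Complex.I)
    = - Complex.exp ((x:ℝ) * Complex.I) := by
  rw [← ekey, Complex.exp_pi_mul_I]; ring

lemma sector_neg_preimage (a b : ℝ) :
    (fun z : ℂ => -z) ⁻¹' angularSector 0 a b = angularSector 0 (a + π) (b + π) := by
  ext z
  simp only [mem_preimage, angularSector, mem_setOf_eq]
  constructor
  · rintro ⟨t, ht, φ, h1, h2, hz⟩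
    refine ⟨t, ht, φ + π, by linarith, by linarith, ?_⟩
    have k := ekeypi φ
    linear_combination (-1 : ℂ) * hz - (t:ℂ) * k
  · rintro ⟨t, ht, φ, h1, h2, hz⟩
    refine ⟨t, ht, φ - π, by linarith, by linarith, ?_⟩
    have k := ekeypi (φ - π)
    rw [show φ - π + π = φ by ring] at k
    linear_combination (-1:ℂ) * hz - (t:ℂ) * k

lemma dist_rot (c P : ℂ) (hc : ‖c‖ = 1) (z O : ℂ) :
    dist (c * (z - P)) (c * (O - P)) = dist z O := by
  rw [Complex.dist_eq, ← mul_sub, norm_mul, hc, one_mul,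
    show z - P - (O - P) = z - O by ring, ← Complex.dist_eq]

lemma rot_cball_preimage (c O P : ℂ) (hc : ‖c‖ = 1) (ρ : ℝ) :
    (fun z : ℂ => c * (z - P)) ⁻¹' Metric.closedBall (c * (O - P)) ρ = Metric.closedBall O ρ := by
  ext z; simp only [mem_preimage, Metric.mem_closedBall, dist_rot c P hc]

lemma rot_ball_preimage (c O P : ℂ) (hc : ‖c‖ = 1) (ρ : ℝ) :
    (fun z : ℂ => c * (z - P)) ⁻¹' Metric.ball (c * (O - P)) ρ = Metric.ball O ρ := by
  ext z; simp only [mem_preimage, Metric.mem_ball, dist_rot c P hc]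

lemma neg_cball_preimage (w : ℂ) (ρ : ℝ) :
    (fun z : ℂ => -z) ⁻¹' Metric.closedBall w ρ = Metric.closedBall (-w) ρ := by
  ext z; simp only [mem_preimage, Metric.mem_closedBall]
  rw [show dist (-z) w = dist z (-w) by rw [← dist_neg_neg, neg_neg]]

lemma neg_ball_preimage (w : ℂ) (ρ : ℝ) :
    (fun z : ℂ => -z) ⁻¹' Metric.ball w ρ = Metric.ball (-w) ρ := by
  ext z; simp only [mem_preimage, Metric.mem_ball]
  rw [show dist (-z) w = dist z (-w) by rw [← dist_neg_neg, neg_neg]]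

lemma mem_annulus_iff (R r t φ : ℝ) (w : ℂ) (hw : ‖w‖ = r)
    (hr : 0 ≤ r) (hR : 0 ≤ R) (ht : 0 < t) :
    ((t:ℂ) * Complex.exp ((φ:ℝ) * Complex.I) ∈ Metric.closedBall w R \ Metric.ball w r)
      ↔ (0 ≤ t^2 - 2*t*((Complex.exp ((φ:ℝ)*Complex.I) * (starRingEnd ℂ) w).re)
         ∧ t^2 - 2*t*((Complex.exp ((φ:ℝ)*Complex.I) * (starRingEnd ℂ) w).re) ≤ R^2 - r^2) := by
  set z : ℂ := (t:ℂ) * Complex.exp ((φ:ℝ) * Complex.I) with hz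
  set u : ℝ := (Complex.exp ((φ:ℝ)*Complex.I) * (starRingEnd ℂ) w).re with hu
  have habs : ‖z‖ = t := by
    rw [hz, norm_mul, Complex.norm_real, Real.norm_eq_abs, Complex.norm_exp_ofReal_mul_I, mul_one, abs_of_pos ht]
  have hnorm : Complex.normSq (z - w) = t^2 - 2*t*u + r^2 := by
    rw [Complex.normSq_sub]
    have h1 : Complex.normSq z = t^2 := by rw [← Complex.sq_norm, habs]
    have h2 : Complex.normSq w = r^2 := by rw [← Complex.sq_norm, hw]
    have h3 : (z * (starRingEnd ℂ) w).re = t * u := by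
      rw [hz, mul_assoc, hu]
      simp
    rw [h1, h2, h3]; ring
  have hmem : z ∈ Metric.closedBall w R \ Metric.ball w r ↔
      (Complex.normSq (z - w) ≤ R^2 ∧ r^2 ≤ Complex.normSq (z - w)) := by
    rw [mem_diff, Metric.mem_closedBall, Metric.mem_ball, not_lt, Complex.dist_eq,
      ← Complex.sq_norm]
    constructor
    · rintro ⟨h1, h2⟩
      exact ⟨by nlinarith [norm_nonneg (z - w)], by nlinarith [norm_nonneg (z - w)]⟩
    · rintro ⟨h1, h2⟩
      exact ⟨by nlinarith [norm_nonneg (z - w)], by nlinarith [norm_nonneg (z - w)]⟩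
  rw [hmem, hnorm]
  constructor
  · rintro ⟨h1, h2⟩; exact ⟨by linarith, by linarith⟩
  · rintro ⟨h1, h2⟩; exact ⟨by linarith, by linarith⟩

lemma not_mem_sector (a t φ : ℝ) (ha2 : a ≤ π/2) (ht : 0 < t)
    (hφ : φ ∈ Set.Ioo (-π) π) (hφ2 : φ ∉ Set.Icc (-a) a) :
    (t:ℂ) * Complex.exp ((φ:ℝ) * Complex.I) ∉ angularSector 0 (-a) a := by
  rintro ⟨t', ht', ψ, h1, h2, hzeq⟩
  rw [zero_add] at hzeq
  have habs : t = t' := by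
    have := congrArg (‖·‖) hzeq
    simpa [Complex.norm_exp_ofReal_mul_I, abs_of_pos ht, abs_of_nonneg ht'] using this
  subst habs
  have hexp : Complex.exp ((φ:ℝ) * Complex.I) = Complex.exp ((ψ:ℝ) * Complex.I) := by
    have htne : (t:ℂ) ≠ 0 := by exact_mod_cast ht.ne'
    exact mul_left_cancel₀ htne hzeq
  obtain ⟨n, hn⟩ := Complex.exp_eq_exp_iff_exists_int.mp hexp
  have him : φ = ψ + n * (2 * π) := by
    have := congrArg Complex.im hn
    simpa using this
  have hπ : 0 < π := pi_pos
  have hn0 : n = 0 := by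
    have hb1 : (n:ℝ) < 1 := by nlinarith [hφ.1, hφ.2, h1, h2]
    have hb2 : (-1:ℝ) < n := by nlinarith [hφ.1, hφ.2, h1, h2]
    have : n < 1 := by exact_mod_cast hb1
    have : -1 < n := by exact_mod_cast hb2
    omega
  rw [hn0] at him
  simp at him
  exact hφ2 (him ▸ ⟨h1, h2⟩)

lemma radial_integral (R r U : ℝ) (hr : 0 < r) (hrR : r < R) (hU : |U| ≤ r) :
    (∫ t, ({t : ℝ | 0 < t ∧ 0 ≤ t^2 - 2*t*U ∧ t^2 - 2*t*U ≤ R^2 - r^2}.indicator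
      (fun x => x) t)) = secG R r U := by
  have hR2 : r^2 < R^2 := by nlinarith
  obtain ⟨s, hs⟩ : ∃ x, Real.sqrt (U^2 + (R^2 - r^2)) = x := ⟨_, rfl⟩
  have hs0 : 0 ≤ s := hs ▸ Real.sqrt_nonneg _
  have hs2 : s^2 = U^2 + (R^2 - r^2) := by rw [← hs]; exact Real.sq_sqrt (by nlinarith)
  have hUs : |U| < s := by nlinarith [sq_abs U, abs_nonneg U]
  have hUlt : U < s := lt_of_le_of_lt (le_abs_self U) hUs
  have hUgt : -s < U := by nlinarith [neg_abs_le U]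
  have hm0 : (0:ℝ) ≤ max 0 (2*U) := le_max_left _ _
  have hmL : max 0 (2*U) ≤ U + s := max_le (by nlinarith) (by nlinarith)
  have hae : ({t : ℝ | 0 < t ∧ 0 ≤ t^2 - 2*t*U ∧ t^2 - 2*t*U ≤ R^2 - r^2}.indicator
      (fun x => x)) =ᵐ[volume] (Ioc (max 0 (2*U)) (U + s)).indicator (fun x => x) := by
    filter_upwards [compl_mem_ae_iff.2 (measure_singleton (max 0 (2*U)))] with t ht
    have htm : t ≠ max 0 (2*U) := by simpa using ht
    have hiff : t ∈ {t : ℝ | 0 < t ∧ 0 ≤ t^2 - 2*t*U ∧ t^2 - 2*t*U ≤ R^2 - r^2}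
        ↔ t ∈ Ioc (max 0 (2*U)) (U + s) := by
      simp only [mem_setOf_eq, mem_Ioc]
      constructor
      · rintro ⟨ht0, c1, c2⟩
        have h2U : 2*U ≤ t := by nlinarith
        refine ⟨lt_of_le_of_ne (max_le ht0.le h2U) (Ne.symm htm), ?_⟩
        nlinarith [sq_nonneg (t - U - s), sq_nonneg (t - U + s)]
      · rintro ⟨h1, h2⟩
        have h2U : 2*U < t := lt_of_le_of_lt (le_max_right 0 (2*U)) h1
        have ht0 : 0 < t := lt_of_le_of_lt hm0 h1
        refine ⟨ht0, by nlinarith, by nlinarith⟩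
    by_cases hin : t ∈ {t : ℝ | 0 < t ∧ 0 ≤ t^2 - 2*t*U ∧ t^2 - 2*t*U ≤ R^2 - r^2}
    · rw [Set.indicator_of_mem hin, Set.indicator_of_mem (hiff.1 hin)]
    · rw [Set.indicator_of_notMem hin, Set.indicator_of_notMem (fun h => hin (hiff.2 h))]
  rw [MeasureTheory.integral_congr_ae hae,
    MeasureTheory.integral_indicator measurableSet_Ioc,
    ← intervalIntegral.integral_of_le hmL, integral_id, secG, hs]

lemma key (R r : ℝ) (hr : 0 < r) (hrR : r < R) (a : ℝ) (ha : 0 < a) (ha2 : a ≤ π/2)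
    (w : ℂ) (hw : ‖w‖ = r) :
    (volume ((Metric.closedBall w R \ Metric.ball w r) ∩ angularSector 0 (-a) a)).toReal
      = ∫ φ in (-a)..a, secG R r ((Complex.exp ((φ:ℝ) * Complex.I) * (starRingEnd ℂ) w).re) := by
  have hπ : 0 < π := pi_pos
  have haπ : a < π := by linarith
  have hR2 : r^2 < R^2 := by nlinarith
  set A : Set ℂ := (Metric.closedBall w R \ Metric.ball w r) ∩ angularSector 0 (-a) a with hA
  have hAm : MeasurableSet A :=
    (measurableSet_closedBall.diff measurableSet_ball).inter (measurableSet_angularSector 0 (-a) a)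
  have hAsub : ∀ z ∈ A, ‖z‖ ≤ R + r := by
    intro z hz
    have h1 : dist z w ≤ R := Metric.mem_closedBall.1 hz.1.1
    calc ‖z‖ = ‖z - w + w‖ := by ring_nf
      _ ≤ ‖z - w‖ + ‖w‖ := norm_add_le _ _
      _ ≤ R + r := by rw [hw]; exact add_le_add_left ((Complex.dist_eq z w).symm.trans_le h1) r
  -- the integrand in polar coordinates
  set g : ℝ × ℝ → ℝ := fun q =>
    q.1 * A.indicator 1 ((q.1:ℂ) * Complex.exp ((q.2:ℝ) * Complex.I)) with hg
  set F : ℝ × ℝ → ℝ := fun p => (polarCoord.target).indicator g p with hF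
  have htgtm : MeasurableSet polarCoord.target := polarCoord.open_target.measurableSet
  have hsymm : ∀ p : ℝ × ℝ,
      Complex.polarCoord.symm p = (p.1 : ℂ) * Complex.exp ((p.2:ℝ) * Complex.I) := by
    intro p
    rw [Complex.polarCoord_symm_apply, Complex.exp_mul_I, ← Complex.ofReal_cos,
      ← Complex.ofReal_sin]
  have hgm : Measurable g := by
    apply measurable_fst.mul
    have h1 : Measurable (A.indicator (1 : ℂ → ℝ)) := measurable_const.indicator hAm
    have h2 : Measurable (fun q : ℝ × ℝ => (q.1:ℂ) * Complex.exp ((q.2:ℝ) * Complex.I)) := by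
      fun_prop
    exact h1.comp h2
  have hFm : Measurable F := hgm.indicator htgtm
  have hFbound : ∀ p : ℝ × ℝ, ‖F p‖ ≤
      ((Ioc (0:ℝ) (R+r) ×ˢ Ioo (-π) π).indicator (fun _ => (R+r)) : ℝ × ℝ → ℝ) p := by
    rintro ⟨t, φ⟩
    have hGnn : (0:ℝ) ≤ (Ioc (0:ℝ) (R+r) ×ˢ Ioo (-π) π).indicator (fun _ => (R+r)) (t, φ) :=
      Set.indicator_nonneg (fun _ _ => by linarith) _
    by_cases hp : (t, φ) ∈ polarCoord.target
    · have ht : 0 < t := by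
        rw [polarCoord_target] at hp; exact hp.1
      have hφIoo : φ ∈ Ioo (-π) π := by
        rw [polarCoord_target] at hp; exact hp.2
      rw [hF]
      simp only [Set.indicator_of_mem hp]
      by_cases hzA : ((t:ℂ) * Complex.exp ((φ:ℝ) * Complex.I)) ∈ A
      · have habs : ‖(t:ℂ) * Complex.exp ((φ:ℝ) * Complex.I)‖ = t := by
          rw [norm_mul, Complex.norm_real, Real.norm_eq_abs, Complex.norm_exp_ofReal_mul_I, mul_one, abs_of_pos ht]
        have htle : t ≤ R + r := by rw [← habs]; exact hAsub _ hzA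
        rw [hg]
        simp only [Set.indicator_of_mem hzA, Pi.one_apply, mul_one]
        rw [Set.indicator_of_mem (by exact ⟨⟨ht, htle⟩, hφIoo⟩)]
        rw [Real.norm_eq_abs, abs_of_pos ht]
        exact htle
      · rw [hg]
        simp only [Set.indicator_of_notMem hzA, mul_zero, norm_zero]
        exact hGnn
    · rw [hF]
      simp only [Set.indicator_of_notMem hp, norm_zero]
      exact hGnn
  have hFi : Integrable F ((volume : Measure ℝ).prod (volume : Measure ℝ)) := by
    have hGi : Integrable
        ((Ioc (0:ℝ) (R+r) ×ˢ Ioo (-π) π).indicator (fun _ => (R+r)) : ℝ × ℝ → ℝ)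
        ((volume : Measure ℝ).prod volume) := by
      rw [integrable_indicator_iff (measurableSet_Ioc.prod measurableSet_Ioo)]
      refine integrableOn_const ?_ (by simp)
      apply ne_of_lt
      rw [Measure.prod_prod]
      exact ENNReal.mul_lt_top measure_Ioc_lt_top measure_Ioo_lt_top
    exact hGi.mono' (hFm.aestronglyMeasurable) (Filter.Eventually.of_forall hFbound)
  have inner_eq : ∀ φ : ℝ, (∫ t, F (t, φ)) =
      (Icc (-a) a).indicator
        (fun ψ => secG R r ((Complex.exp ((ψ:ℝ) * Complex.I) * (starRingEnd ℂ) w).re)) φ := by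
    intro φ
    by_cases hφI : φ ∈ Icc (-a) a
    · rw [Set.indicator_of_mem hφI]
      have hφIoo : φ ∈ Ioo (-π) π := ⟨by linarith [hφI.1], by linarith [hφI.2]⟩
      have hUabs : |(Complex.exp ((φ:ℝ)*Complex.I) * (starRingEnd ℂ) w).re| ≤ r := by
        calc |(Complex.exp ((φ:ℝ)*Complex.I) * (starRingEnd ℂ) w).re|
            ≤ ‖Complex.exp ((φ:ℝ)*Complex.I) * (starRingEnd ℂ) w‖ :=
              Complex.abs_re_le_norm _
          _ = r := by rw [norm_mul, Complex.norm_exp_ofReal_mul_I, one_mul, Complex.norm_conj, hw]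
      have hfun : (fun t : ℝ => F (t, φ)) =
          ({t : ℝ | 0 < t ∧
              0 ≤ t^2 - 2*t*((Complex.exp ((φ:ℝ)*Complex.I) * (starRingEnd ℂ) w).re) ∧
              t^2 - 2*t*((Complex.exp ((φ:ℝ)*Complex.I) * (starRingEnd ℂ) w).re) ≤ R^2 - r^2}.indicator
            (fun x => x)) := by
        funext t
        by_cases ht : 0 < t
        · have hmem : (t, φ) ∈ polarCoord.target := by
            rw [polarCoord_target]; exact ⟨ht, hφIoo⟩
          have hsec : ((t:ℂ) * Complex.exp ((φ:ℝ)*Complex.I)) ∈ angularSector 0 (-a) a :=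
            ⟨t, ht.le, φ, hφI.1, hφI.2, (zero_add _).symm⟩
          have hiff : ((t:ℂ) * Complex.exp ((φ:ℝ)*Complex.I)) ∈ A ↔
              (0 ≤ t^2 - 2*t*((Complex.exp ((φ:ℝ)*Complex.I) * (starRingEnd ℂ) w).re) ∧
               t^2 - 2*t*((Complex.exp ((φ:ℝ)*Complex.I) * (starRingEnd ℂ) w).re) ≤ R^2 - r^2) := by
            rw [hA, mem_inter_iff, and_iff_left hsec,
              mem_annulus_iff R r t φ w hw hr.le (by linarith) ht]
          rw [hF]
          simp only [Set.indicator_of_mem hmem, hg]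
          by_cases hzA : ((t:ℂ) * Complex.exp ((φ:ℝ)*Complex.I)) ∈ A
          · have hts : t ∈ {t : ℝ | 0 < t ∧
                0 ≤ t^2 - 2*t*((Complex.exp ((φ:ℝ)*Complex.I) * (starRingEnd ℂ) w).re) ∧
                t^2 - 2*t*((Complex.exp ((φ:ℝ)*Complex.I) * (starRingEnd ℂ) w).re) ≤ R^2 - r^2} :=
              ⟨ht, hiff.1 hzA⟩
            rw [Set.indicator_of_mem hzA, Set.indicator_of_mem hts, Pi.one_apply, mul_one]
          · rw [Set.indicator_of_notMem hzA, Set.indicator_of_notMem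
              (fun h => hzA (hiff.2 h.2)), mul_zero]
        · have hnot : (t, φ) ∉ polarCoord.target := by
            rw [polarCoord_target]
            rintro ⟨h1, -⟩
            exact absurd h1 ht
          rw [hF]
          simp only [Set.indicator_of_notMem hnot]
          rw [Set.indicator_of_notMem (fun h => absurd h.1 ht)]
      rw [show (∫ t, F (t, φ)) = ∫ t, (fun t : ℝ => F (t, φ)) t from rfl, hfun,
        radial_integral R r _ hr hrR hUabs]
    · rw [Set.indicator_of_notMem hφI]
      have hzero : ∀ t : ℝ, F (t, φ) = 0 := by
        intro t
        by_cases hmem : (t, φ) ∈ polarCoord.target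
        · have ht : 0 < t := by rw [polarCoord_target] at hmem; exact hmem.1
          have hφIoo : φ ∈ Ioo (-π) π := by rw [polarCoord_target] at hmem; exact hmem.2
          rw [hF]
          simp only [Set.indicator_of_mem hmem, hg]
          rw [Set.indicator_of_notMem
            (fun (hzA : ((t:ℂ) * Complex.exp ((φ:ℝ)*Complex.I)) ∈ A) =>
              not_mem_sector a t φ ha2 ht hφIoo hφI hzA.2), mul_zero]
        · rw [hF]; simp only [Set.indicator_of_notMem hmem]
      simp only [hzero, integral_zero]
  calc (volume A).toReal
      = ∫ z, A.indicator 1 z := (MeasureTheory.integral_indicator_one hAm).symm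
    _ = ∫ p in polarCoord.target, p.1 • A.indicator 1 (Complex.polarCoord.symm p) :=
        (Complex.integral_comp_polarCoord_symm (A.indicator 1)).symm
    _ = ∫ p, F p := by
        rw [hF, MeasureTheory.integral_indicator htgtm]
        refine setIntegral_congr_fun htgtm (fun p _ => ?_)
        rw [hsymm p, smul_eq_mul, hg]
    _ = ∫ φ, ∫ t, F (t, φ) := by
        rw [Measure.volume_eq_prod]
        exact integral_prod_symm F hFi
    _ = ∫ φ, (Icc (-a) a).indicator
          (fun ψ => secG R r ((Complex.exp ((ψ:ℝ) * Complex.I) * (starRingEnd ℂ) w).re)) φ :=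
        integral_congr_ae (Filter.Eventually.of_forall inner_eq)
    _ = ∫ φ in Icc (-a) a, secG R r ((Complex.exp ((φ:ℝ) * Complex.I) * (starRingEnd ℂ) w).re) :=
        MeasureTheory.integral_indicator measurableSet_Icc
    _ = ∫ φ in (-a)..a, secG R r ((Complex.exp ((φ:ℝ) * Complex.I) * (starRingEnd ℂ) w).re) := by
        rw [intervalIntegral.integral_of_le (by linarith : -a ≤ a),
          ← MeasureTheory.integral_Icc_eq_integral_Ioc]

/-- for the annulus `B = D \ int(D̃)` between concentric disks of radii
`R > r > 0` about `O`, and `P` on the inner circle (`dist(O,P) = r`), any two opposite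
closed sectors at `P` of aperture `0 < α ≤ π` cut out regions of `B` of total area
`α(R² − r²)` (that is, `(α/π)` times the area `π(R² − r²)` of the annulus). -/
theorem baumkuchen_stmt8
    (O P : ℂ) (R r : ℝ) (hr : 0 < r) (hrR : r < R)
    (hP : dist O P = r) (α : ℝ) (hα : 0 < α) (hαπ : α ≤ π) :
    ∀ θ : ℝ,
      volume ((Metric.closedBall O R \ interior (Metric.closedBall O r)) ∩
          angularSector P θ (θ + α)) +
      volume ((Metric.closedBall O R \ interior (Metric.closedBall O r)) ∩
          angularSector P (θ + π) (θ + π + α)) =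
      ENNReal.ofReal (α * (R ^ 2 - r ^ 2)) := by
  intro θ
  have hπ : 0 < π := Real.pi_pos
  have hR0 : (0:ℝ) < R := lt_trans hr hrR
  rw [interior_closedBall O (ne_of_gt hr)]
  have hOP : ‖O - P‖ = r := by rw [← Complex.dist_eq]; exact hP
  set c : ℂ := Complex.exp ((-(θ + α/2) : ℝ) * Complex.I) with hcdef
  have hc : ‖c‖ = 1 := Complex.norm_exp_ofReal_mul_I _
  set w : ℂ := c * (O - P) with hwdef
  have hw : ‖w‖ = r := by rw [hwdef, norm_mul, hc, one_mul, hOP]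
  have hwneg : ‖-w‖ = r := by rw [norm_neg, hw]
  -- measure preserving maps
  have hmp : MeasurePreserving (fun z : ℂ => c * (z - P)) volume volume := by
    have h1 : MeasurePreserving (fun z : ℂ => z - P) volume volume :=
      measurePreserving_sub_right volume P
    have h2 : MeasurePreserving (fun z : ℂ => (Circle.exp (-(θ + α/2)) : ℂ) * z)
        volume volume := by
      have h := (rotation (Circle.exp (-(θ + α/2)))).measurePreserving
      have heq : (fun z : ℂ => (Circle.exp (-(θ + α/2)) : ℂ) * z)
          = ⇑(rotation (Circle.exp (-(θ + α/2)))) := by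
        funext z; rw [rotation_apply]
      rw [heq]; exact h
    have hco : (fun z : ℂ => c * (z - P))
        = (fun z : ℂ => (Circle.exp (-(θ + α/2)) : ℂ) * z) ∘ (fun z : ℂ => z - P) := by
      funext z
      rw [Function.comp_apply, Circle.coe_exp, hcdef]
    rw [hco]; exact h2.comp h1
  have hmpneg : MeasurePreserving (fun z : ℂ => -z) volume volume :=
    Measure.measurePreserving_neg volume
  -- set identities
  have id1 : (Metric.closedBall O R \ Metric.ball O r) ∩ angularSector P θ (θ + α)
      = (fun z : ℂ => c * (z - P)) ⁻¹'
        ((Metric.closedBall w R \ Metric.ball w r) ∩ angularSector 0 (-(α/2)) (α/2)) := by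
    rw [preimage_inter, preimage_diff, hwdef, hcdef,
      rot_cball_preimage _ O P hc R, rot_ball_preimage _ O P hc r,
      sector_preimage P (θ + α/2) (-(α/2)) (α/2),
      show -(α/2) + (θ + α/2) = θ by ring, show α/2 + (θ + α/2) = θ + α by ring]
  have id2 : (Metric.closedBall O R \ Metric.ball O r) ∩ angularSector P (θ + π) (θ + π + α)
      = (fun z : ℂ => c * (z - P)) ⁻¹' ((fun z : ℂ => -z) ⁻¹'
        ((Metric.closedBall (-w) R \ Metric.ball (-w) r) ∩ angularSector 0 (-(α/2)) (α/2))) := by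
    rw [preimage_inter, preimage_diff, neg_cball_preimage, neg_ball_preimage, neg_neg,
      sector_neg_preimage (-(α/2)) (α/2),
      preimage_inter, preimage_diff, hwdef, hcdef,
      rot_cball_preimage _ O P hc R, rot_ball_preimage _ O P hc r,
      sector_preimage P (θ + α/2) (-(α/2) + π) (α/2 + π),
      show -(α/2) + π + (θ + α/2) = θ + π by ring,
      show α/2 + π + (θ + α/2) = θ + π + α by ring]
  -- measurability / finiteness of the model sets
  have hm1 : MeasurableSet ((Metric.closedBall w R \ Metric.ball w r) ∩
      angularSector 0 (-(α/2)) (α/2)) :=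
    (measurableSet_closedBall.diff measurableSet_ball).inter
      (measurableSet_angularSector 0 (-(α/2)) (α/2))
  have hm2 : MeasurableSet ((Metric.closedBall (-w) R \ Metric.ball (-w) r) ∩
      angularSector 0 (-(α/2)) (α/2)) :=
    (measurableSet_closedBall.diff measurableSet_ball).inter
      (measurableSet_angularSector 0 (-(α/2)) (α/2))
  have hfin1 : volume ((Metric.closedBall w R \ Metric.ball w r) ∩
      angularSector 0 (-(α/2)) (α/2)) ≠ ⊤ := by
    have hb : volume ((Metric.closedBall w R \ Metric.ball w r) ∩
        angularSector 0 (-(α/2)) (α/2)) ≤ volume (Metric.closedBall w R) :=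
      measure_mono (subset_trans inter_subset_left diff_subset)
    exact ne_of_lt (lt_of_le_of_lt hb measure_closedBall_lt_top)
  have hfin2 : volume ((Metric.closedBall (-w) R \ Metric.ball (-w) r) ∩
      angularSector 0 (-(α/2)) (α/2)) ≠ ⊤ := by
    have hb : volume ((Metric.closedBall (-w) R \ Metric.ball (-w) r) ∩
        angularSector 0 (-(α/2)) (α/2)) ≤ volume (Metric.closedBall (-w) R) :=
      measure_mono (subset_trans inter_subset_left diff_subset)
    exact ne_of_lt (lt_of_le_of_lt hb measure_closedBall_lt_top)
  -- volumes transported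
  have hvol1 : volume ((Metric.closedBall O R \ Metric.ball O r) ∩ angularSector P θ (θ + α))
      = volume ((Metric.closedBall w R \ Metric.ball w r) ∩ angularSector 0 (-(α/2)) (α/2)) := by
    rw [id1]; exact hmp.measure_preimage hm1.nullMeasurableSet
  have hvol2 : volume ((Metric.closedBall O R \ Metric.ball O r) ∩
        angularSector P (θ + π) (θ + π + α))
      = volume ((Metric.closedBall (-w) R \ Metric.ball (-w) r) ∩
        angularSector 0 (-(α/2)) (α/2)) := by
    rw [id2]
    rw [hmp.measure_preimage (hm2.preimage hmpneg.measurable).nullMeasurableSet]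
    exact hmpneg.measure_preimage hm2.nullMeasurableSet
  -- the quantitative part
  have ha : 0 < α/2 := by linarith
  have ha2 : α/2 ≤ π/2 := by linarith
  have hk1 := key R r hr hrR (α/2) ha ha2 w hw
  have hk2 := key R r hr hrR (α/2) ha ha2 (-w) hwneg
  have hnegu : ∀ φ : ℝ, ((Complex.exp ((φ:ℝ) * Complex.I) * (starRingEnd ℂ) (-w)).re)
      = -((Complex.exp ((φ:ℝ) * Complex.I) * (starRingEnd ℂ) w).re) := by
    intro φ; rw [map_neg, mul_neg, Complex.neg_re]
  have hucont : Continuous (fun φ : ℝ =>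
      (Complex.exp ((φ:ℝ) * Complex.I) * (starRingEnd ℂ) w).re) := by fun_prop
  have hseccont : ∀ (f : ℝ → ℝ), Continuous f → Continuous (fun φ => secG R r (f φ)) := by
    intro f hf
    unfold secG
    have h1 : Continuous (fun φ => Real.sqrt (f φ^2 + (R^2 - r^2))) :=
      Real.continuous_sqrt.comp (by fun_prop)
    have h2 : Continuous (fun φ => (f φ + Real.sqrt (f φ^2 + (R^2 - r^2)))^2) :=
      (hf.add h1).pow 2
    have h3 : Continuous (fun φ => (max 0 (2 * f φ))^2) :=
      (continuous_const.max (continuous_const.mul hf)).pow 2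
    exact (h2.sub h3).div_const 2
  have hi1 : IntervalIntegrable (fun φ => secG R r
      ((Complex.exp ((φ:ℝ) * Complex.I) * (starRingEnd ℂ) w).re)) volume (-(α/2)) (α/2) :=
    (hseccont _ hucont).intervalIntegrable _ _
  have hi2 : IntervalIntegrable (fun φ => secG R r
      ((Complex.exp ((φ:ℝ) * Complex.I) * (starRingEnd ℂ) (-w)).re)) volume (-(α/2)) (α/2) := by
    have : Continuous (fun φ : ℝ => secG R r
        ((Complex.exp ((φ:ℝ) * Complex.I) * (starRingEnd ℂ) (-w)).re)) := by
      refine hseccont _ ?_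
      simp only [hnegu]
      exact hucont.neg
    exact this.intervalIntegrable _ _
  have hsum : (volume ((Metric.closedBall w R \ Metric.ball w r) ∩
        angularSector 0 (-(α/2)) (α/2))).toReal
      + (volume ((Metric.closedBall (-w) R \ Metric.ball (-w) r) ∩
        angularSector 0 (-(α/2)) (α/2))).toReal = α * (R^2 - r^2) := by
    rw [hk1, hk2, ← intervalIntegral.integral_add hi1 hi2]
    have hcong : ∀ φ ∈ Set.uIcc (-(α/2)) (α/2),
        (fun φ => secG R r ((Complex.exp ((φ:ℝ) * Complex.I) * (starRingEnd ℂ) w).re)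
          + secG R r ((Complex.exp ((φ:ℝ) * Complex.I) * (starRingEnd ℂ) (-w)).re)) φ
        = (fun _ : ℝ => R^2 - r^2) φ := by
      intro φ _
      simp only
      rw [hnegu φ, secG_add R r _ (by nlinarith)]
    rw [intervalIntegral.integral_congr hcong, intervalIntegral.integral_const, smul_eq_mul]
    ring
  rw [hvol1, hvol2, ← ENNReal.ofReal_toReal hfin1, ← ENNReal.ofReal_toReal hfin2,
    ← ENNReal.ofReal_add ENNReal.toReal_nonneg ENNReal.toReal_nonneg, hsum]
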